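/- Let τ be a Borel probability measure on ℝ² invariant with respect to (π/2)-rotations and let φ₀ be the characteristic function of a Borel probability measure on ℝ. Define recursively, for bounded measurable ψ : ℝ → ℂ, the functions q̂₁(ξ; ψ) := ψ(ξ) and, for n ≥ 2, q̂ₙ(ξ; ψ) := (n−1)⁻¹ Σ_{j=1}^{n−1} ∫_{ℝ²} q̂ⱼ(lξ; ψ) q̂_{n−j}(rξ; ψ) τ(dl dr). Then for every n ≥ 2 and every ξ ∈ ℝ one has q̂ₙ(ξ; φ₀) = q̂ₙ(ξ; Re φ₀), where Re φ₀ denotes the (complex-valued) function ξ ↦ Re(φ₀(ξ)). -/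

import Mathlib

open MeasureTheory Filter Set

noncomputable section

/-- Characteristic function of a measure on `ℝ`. -/
def charFn (μ : Measure ℝ) (ξ : ℝ) : ℂ :=
  ∫ v, Complex.exp (Complex.I * ((ξ * v : ℝ) : ℂ)) ∂μ

/-- `τ` is invariant with respect to `(π/2)`-rotations. -/
def RotationInvariant (τ : Measure (ℝ × ℝ)) : Prop :=
  Measure.map (fun q : ℝ × ℝ => (-q.2, q.1)) τ = τ

/-- The Wild convolution iterates `q̂ₙ(ξ; ψ)`. -/
noncomputable def qhat (τ : Measure (ℝ × ℝ)) (ψ : ℝ → ℂ) : ℕ → ℝ → ℂ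
  | 0 => fun _ => 0
  | 1 => ψ
  | n + 2 => fun ξ =>
      ((n + 1 : ℕ) : ℂ)⁻¹ *
        ∑ j ∈ (Finset.Icc 1 (n + 1)).attach,
          ∫ q : ℝ × ℝ, qhat τ ψ j.1 (q.1 * ξ) * qhat τ ψ (n + 2 - j.1) (q.2 * ξ) ∂τ
  termination_by n => n
  decreasing_by
  all_goals
    have h := Finset.mem_Icc.mp j.2
    omega

/-- Bounded measurable functions are integrable against a probability measure. -/
lemma integrable_of_bdd {τ : Measure (ℝ × ℝ)} [IsProbabilityMeasure τ] {f : ℝ × ℝ → ℂ}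
    (hm : Measurable f) (hb : ∀ q, ‖f q‖ ≤ 1) : Integrable f τ :=
  (integrable_const (1:ℝ)).mono' hm.aestronglyMeasurable (ae_of_all _ hb)

lemma int_prod {τ : Measure (ℝ × ℝ)} [IsProbabilityMeasure τ] {u v : ℝ × ℝ → ℂ}
    (hu : Measurable u) (hv : Measurable v) (hub : ∀ q, ‖u q‖ ≤ 1) (hvb : ∀ q, ‖v q‖ ≤ 1) :
    Integrable (fun q => u q * v q) τ :=
  integrable_of_bdd (hu.mul hv) (fun q => by
    rw [norm_mul]; exact mul_le_one₀ (hub q) (norm_nonneg _) (hvb q))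

/-- Substitution using rotation invariance. -/
lemma rot_int {τ : Measure (ℝ × ℝ)} (hrot : RotationInvariant τ) {f : ℝ × ℝ → ℂ}
    (hm : Measurable f) : ∫ q, f q ∂τ = ∫ q, f (-q.2, q.1) ∂τ := by
  conv_lhs => rw [← hrot]
  exact integral_map ((measurable_snd.neg.prodMk measurable_fst).aemeasurable)
    (by rw [show (fun a : ℝ × ℝ => ((-Prod.snd) a, a.1)) = (fun q : ℝ × ℝ => (-q.2, q.1)) from rfl, hrot]; exact hm.aestronglyMeasurable)

lemma qhat_meas_bdd (τ : Measure (ℝ × ℝ)) [IsProbabilityMeasure τ] (ψ : ℝ → ℂ)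
    (hm : Measurable ψ) (hb : ∀ ζ, ‖ψ ζ‖ ≤ 1) :
    ∀ n, Measurable (qhat τ ψ n) ∧ ∀ ξ, ‖qhat τ ψ n ξ‖ ≤ 1 := by
  intro n
  induction n using Nat.strong_induction_on with
  | _ n ih =>
    match n with
    | 0 => rw [qhat.eq_1]; exact ⟨measurable_const, fun ξ => by simp⟩
    | 1 => rw [qhat.eq_2]; exact ⟨hm, hb⟩
    | (m+2) =>
      have hj : ∀ j ∈ Finset.Icc 1 (m+1), j < m + 2 ∧ m + 2 - j < m + 2 := by
        intro j hj; have := Finset.mem_Icc.mp hj; omega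
      constructor
      · have : ∀ j : {x // x ∈ Finset.Icc 1 (m+1)}, Measurable (fun ξ : ℝ =>
            ∫ q : ℝ × ℝ, qhat τ ψ j.1 (q.1 * ξ) * qhat τ ψ (m + 2 - j.1) (q.2 * ξ) ∂τ) := by
          intro j
          have h1 := (ih _ (hj _ j.2).1).1
          have h2 := (ih _ (hj _ j.2).2).1
          have : StronglyMeasurable (fun p : ℝ × (ℝ × ℝ) =>
              qhat τ ψ j.1 (p.2.1 * p.1) * qhat τ ψ (m + 2 - j.1) (p.2.2 * p.1)) := by
            exact ((h1.comp ((measurable_fst.comp measurable_snd).mul measurable_fst)).mul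
              (h2.comp ((measurable_snd.comp measurable_snd).mul measurable_fst))).stronglyMeasurable
          exact this.integral_prod_right'.measurable
        rw [qhat.eq_3]
        exact (Finset.measurable_sum _ (fun j _ => this j)).const_mul _
      · intro ξ
        rw [qhat.eq_3]
        beta_reduce
        rw [norm_mul]
        have hbound : ∀ j : {x // x ∈ Finset.Icc 1 (m+1)},
            ‖∫ q : ℝ × ℝ, qhat τ ψ j.1 (q.1 * ξ) * qhat τ ψ (m + 2 - j.1) (q.2 * ξ) ∂τ‖ ≤ 1 := by
          intro j
          have h1 := (ih _ (hj _ j.2).1).2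
          have h2 := (ih _ (hj _ j.2).2).2
          calc ‖∫ q : ℝ × ℝ, qhat τ ψ j.1 (q.1 * ξ) * qhat τ ψ (m + 2 - j.1) (q.2 * ξ) ∂τ‖
              ≤ 1 * (τ Set.univ).toReal := norm_integral_le_of_norm_le_const (ae_of_all _ (fun q => by
                  rw [norm_mul]
                  exact mul_le_one₀ (h1 _) (norm_nonneg _) (h2 _)))
            _ = 1 := by simp
        calc ‖((m + 1 : ℕ) : ℂ)⁻¹‖ * ‖∑ j ∈ (Finset.Icc 1 (m + 1)).attach,
              ∫ q : ℝ × ℝ, qhat τ ψ j.1 (q.1 * ξ) * qhat τ ψ (m + 2 - j.1) (q.2 * ξ) ∂τ‖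
            ≤ ‖((m + 1 : ℕ) : ℂ)⁻¹‖ * ((m+1 : ℕ) : ℝ) := by
              refine mul_le_mul_of_nonneg_left ?_ (norm_nonneg _)
              calc ‖∑ j ∈ (Finset.Icc 1 (m + 1)).attach, _‖ ≤
                  ∑ j ∈ (Finset.Icc 1 (m + 1)).attach, (1:ℝ) :=
                    (norm_sum_le _ _).trans (Finset.sum_le_sum (fun j _ => hbound j))
                _ = ((m+1 : ℕ) : ℝ) := by simp
          _ = 1 := by
              rw [norm_inv, Complex.norm_natCast, inv_mul_cancel₀]
              positivity

lemma qhat_neg (τ : Measure (ℝ × ℝ)) (ψ : ℝ → ℂ) :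
    ∀ n ξ, qhat τ ψ n (-ξ) = qhat τ (fun ζ => ψ (-ζ)) n ξ := by
  intro n
  induction n using Nat.strong_induction_on with
  | _ n ih =>
    match n with
    | 0 => intro ξ; rw [qhat.eq_1, qhat.eq_1]
    | 1 => intro ξ; rw [qhat.eq_2, qhat.eq_2]
    | (m+2) =>
      intro ξ
      rw [qhat.eq_3, qhat.eq_3]
      beta_reduce
      congr 1
      apply Finset.sum_congr rfl
      intro j _
      have hjm := Finset.mem_Icc.mp j.2
      congr 1
      funext q
      rw [show q.1 * -ξ = -(q.1 * ξ) by ring, show q.2 * -ξ = -(q.2 * ξ) by ring,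
        ih j.1 (by omega), ih (m + 2 - j.1) (by omega)]

/-- The chain of equalities coming from rotation invariance, for a level-one slot paired
with an even function `g`. -/
lemma chain (τ : Measure (ℝ × ℝ)) [IsProbabilityMeasure τ] (hrot : RotationInvariant τ)
    (ψ g : ℝ → ℂ) (hψm : Measurable ψ) (hgm : Measurable g)
    (hgev : ∀ x, g (-x) = g x) (ξ : ℝ) :
    ((∫ q : ℝ × ℝ, ψ (-(q.1 * ξ)) * g (q.2 * ξ) ∂τ) = ∫ q : ℝ × ℝ, ψ (q.1 * ξ) * g (q.2 * ξ) ∂τ) ∧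
    ((∫ q : ℝ × ℝ, g (q.1 * ξ) * ψ (-(q.2 * ξ)) ∂τ) = ∫ q : ℝ × ℝ, g (q.1 * ξ) * ψ (q.2 * ξ) ∂τ) := by
  have mψ1 : Measurable (fun q : ℝ × ℝ => ψ (q.1 * ξ)) := hψm.comp (measurable_fst.mul_const ξ)
  have mψ1' : Measurable (fun q : ℝ × ℝ => ψ (-(q.1 * ξ))) :=
    hψm.comp (measurable_fst.mul_const ξ).neg
  have mψ2' : Measurable (fun q : ℝ × ℝ => ψ (-(q.2 * ξ))) :=
    hψm.comp (measurable_snd.mul_const ξ).neg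
  have mg1 : Measurable (fun q : ℝ × ℝ => g (q.1 * ξ)) := hgm.comp (measurable_fst.mul_const ξ)
  have mg2 : Measurable (fun q : ℝ × ℝ => g (q.2 * ξ)) := hgm.comp (measurable_snd.mul_const ξ)
  have h14 : (∫ q : ℝ × ℝ, ψ (q.1 * ξ) * g (q.2 * ξ) ∂τ)
      = ∫ q : ℝ × ℝ, g (q.1 * ξ) * ψ (-(q.2 * ξ)) ∂τ := by
    rw [rot_int hrot (f := fun q : ℝ × ℝ => ψ (q.1 * ξ) * g (q.2 * ξ)) (mψ1.mul mg2)]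
    congr 1; funext q
    show ψ (-q.2 * ξ) * g (q.1 * ξ) = _
    rw [neg_mul, mul_comm]
  have h43 : (∫ q : ℝ × ℝ, g (q.1 * ξ) * ψ (-(q.2 * ξ)) ∂τ)
      = ∫ q : ℝ × ℝ, ψ (-(q.1 * ξ)) * g (q.2 * ξ) ∂τ := by
    rw [rot_int hrot (f := fun q : ℝ × ℝ => g (q.1 * ξ) * ψ (-(q.2 * ξ))) (mg1.mul mψ2')]
    congr 1; funext q
    show g (-q.2 * ξ) * ψ (-(q.1 * ξ)) = _
    rw [neg_mul, hgev, mul_comm]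
  have h32 : (∫ q : ℝ × ℝ, ψ (-(q.1 * ξ)) * g (q.2 * ξ) ∂τ)
      = ∫ q : ℝ × ℝ, g (q.1 * ξ) * ψ (q.2 * ξ) ∂τ := by
    rw [rot_int hrot (f := fun q : ℝ × ℝ => ψ (-(q.1 * ξ)) * g (q.2 * ξ)) (mψ1'.mul mg2)]
    congr 1; funext q
    show ψ (-(-q.2 * ξ)) * g (q.1 * ξ) = _
    rw [neg_mul, neg_neg, mul_comm]
  exact ⟨(h14.trans h43).symm, h43.trans h32⟩

/-- Key lemma: for `n ≥ 2` the Wild iterates of `ψ` and of its symmetrization coincide. -/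
lemma key (τ : Measure (ℝ × ℝ)) [IsProbabilityMeasure τ] (hrot : RotationInvariant τ) :
    ∀ n, 2 ≤ n → ∀ ψ : ℝ → ℂ, Measurable ψ → (∀ ζ, ‖ψ ζ‖ ≤ 1) → ∀ ξ,
      qhat τ ψ n ξ = qhat τ (fun ζ => (ψ ζ + ψ (-ζ)) / 2) n ξ := by
  intro n
  induction n using Nat.strong_induction_on with
  | _ n ih =>
  match n with
  | 0 => intro h; exact absurd h (by omega)
  | 1 => intro h; exact absurd h (by omega)
  | (m+2) =>
    intro _ ψ hm hb ξ
    have hsm : Measurable (fun ζ => (ψ ζ + ψ (-ζ)) / 2) :=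
      (hm.add (hm.comp measurable_neg)).div_const 2
    have hsb : ∀ ζ, ‖(ψ ζ + ψ (-ζ)) / 2‖ ≤ 1 := by
      intro ζ
      rw [norm_div]
      have h1 : ‖ψ ζ + ψ (-ζ)‖ ≤ 2 := (norm_add_le _ _).trans (by linarith [hb ζ, hb (-ζ)])
      have h2 : ‖(2:ℂ)‖ = 2 := by norm_num
      rw [h2]
      linarith
    have htm : Measurable (fun ζ => ψ (-ζ)) := hm.comp measurable_neg
    have htb : ∀ ζ, ‖(fun ζ => ψ (-ζ)) ζ‖ ≤ 1 := fun ζ => hb _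
    have hts : (fun ζ => ((fun ζ => ψ (-ζ)) ζ + (fun ζ => ψ (-ζ)) (-ζ)) / 2)
        = (fun ζ => (ψ ζ + ψ (-ζ)) / 2) := by
      funext ζ; simp only [neg_neg]; rw [add_comm]
    have Hs : ∀ k, 2 ≤ k → k < m + 2 → ∀ x,
        qhat τ (fun ζ => (ψ ζ + ψ (-ζ)) / 2) k x = qhat τ ψ k x :=
      fun k h2 hlt x => (ih k hlt h2 ψ hm hb x).symm
    have Ht : ∀ k, 2 ≤ k → k < m + 2 → ∀ x,
        qhat τ (fun ζ => ψ (-ζ)) k x = qhat τ ψ k x := by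
      intro k h2 hlt x
      rw [ih k hlt h2 (fun ζ => ψ (-ζ)) htm htb x, hts]
      exact Hs k h2 hlt x
    have Hev : ∀ k, 2 ≤ k → k < m + 2 → ∀ x, qhat τ ψ k (-x) = qhat τ ψ k x := by
      intro k h2 hlt x
      rw [qhat_neg]
      exact Ht k h2 hlt x
    rw [qhat.eq_3, qhat.eq_3]
    beta_reduce
    congr 1
    rw [Finset.sum_attach _ (fun j => ∫ q : ℝ × ℝ,
        qhat τ ψ j (q.1 * ξ) * qhat τ ψ (m + 2 - j) (q.2 * ξ) ∂τ),
      Finset.sum_attach _ (fun j => ∫ q : ℝ × ℝ,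
        qhat τ (fun ζ => (ψ ζ + ψ (-ζ)) / 2) j (q.1 * ξ) *
          qhat τ (fun ζ => (ψ ζ + ψ (-ζ)) / 2) (m + 2 - j) (q.2 * ξ) ∂τ)]
    apply Finset.sum_congr rfl
    intro j hj
    have hjm := Finset.mem_Icc.mp hj
    by_cases hj1 : j = 1
    · subst hj1
      by_cases hm0 : m = 0
      · -- n = 2 : the four-fold symmetrization
        subst hm0
        rw [show 0 + 2 - 1 = 1 by omega, qhat.eq_2, qhat.eq_2]
        have mψ1 : Measurable (fun q : ℝ × ℝ => ψ (q.1 * ξ)) :=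
          hm.comp (measurable_fst.mul_const ξ)
        have mψ1' : Measurable (fun q : ℝ × ℝ => ψ (-(q.1 * ξ))) :=
          hm.comp (measurable_fst.mul_const ξ).neg
        have mψ2 : Measurable (fun q : ℝ × ℝ => ψ (q.2 * ξ)) :=
          hm.comp (measurable_snd.mul_const ξ)
        have mψ2' : Measurable (fun q : ℝ × ℝ => ψ (-(q.2 * ξ))) :=
          hm.comp (measurable_snd.mul_const ξ).neg
        have hi11 : Integrable (fun q : ℝ × ℝ => ψ (q.1 * ξ) * ψ (q.2 * ξ)) τ :=
          int_prod mψ1 mψ2 (fun q => hb _) (fun q => hb _)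
        have hi12 : Integrable (fun q : ℝ × ℝ => ψ (q.1 * ξ) * ψ (-(q.2 * ξ))) τ :=
          int_prod mψ1 mψ2' (fun q => hb _) (fun q => hb _)
        have hi21 : Integrable (fun q : ℝ × ℝ => ψ (-(q.1 * ξ)) * ψ (q.2 * ξ)) τ :=
          int_prod mψ1' mψ2 (fun q => hb _) (fun q => hb _)
        have hi22 : Integrable (fun q : ℝ × ℝ => ψ (-(q.1 * ξ)) * ψ (-(q.2 * ξ))) τ :=
          int_prod mψ1' mψ2' (fun q => hb _) (fun q => hb _)
        have h1112 : (∫ q : ℝ × ℝ, ψ (q.1 * ξ) * ψ (q.2 * ξ) ∂τ)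
            = ∫ q : ℝ × ℝ, ψ (q.1 * ξ) * ψ (-(q.2 * ξ)) ∂τ := by
          rw [rot_int hrot (f := fun q : ℝ × ℝ => ψ (q.1 * ξ) * ψ (q.2 * ξ)) (mψ1.mul mψ2)]
          congr 1; funext q
          show ψ (-q.2 * ξ) * ψ (q.1 * ξ) = _
          rw [neg_mul, mul_comm]
        have h1222 : (∫ q : ℝ × ℝ, ψ (q.1 * ξ) * ψ (-(q.2 * ξ)) ∂τ)
            = ∫ q : ℝ × ℝ, ψ (-(q.1 * ξ)) * ψ (-(q.2 * ξ)) ∂τ := by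
          rw [rot_int hrot (f := fun q : ℝ × ℝ => ψ (q.1 * ξ) * ψ (-(q.2 * ξ))) (mψ1.mul mψ2')]
          congr 1; funext q
          show ψ (-q.2 * ξ) * ψ (-(q.1 * ξ)) = _
          rw [neg_mul, mul_comm]
        have h2221 : (∫ q : ℝ × ℝ, ψ (-(q.1 * ξ)) * ψ (-(q.2 * ξ)) ∂τ)
            = ∫ q : ℝ × ℝ, ψ (-(q.1 * ξ)) * ψ (q.2 * ξ) ∂τ := by
          rw [rot_int hrot (f := fun q : ℝ × ℝ => ψ (-(q.1 * ξ)) * ψ (-(q.2 * ξ))) (mψ1'.mul mψ2')]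
          congr 1; funext q
          show ψ (-(-q.2 * ξ)) * ψ (-(q.1 * ξ)) = _
          rw [neg_mul, neg_neg, mul_comm]
        symm
        calc (∫ q : ℝ × ℝ, (ψ (q.1 * ξ) + ψ (-(q.1 * ξ))) / 2 *
                ((ψ (q.2 * ξ) + ψ (-(q.2 * ξ))) / 2) ∂τ)
            = ∫ q : ℝ × ℝ, (ψ (q.1 * ξ) * ψ (q.2 * ξ) + ψ (q.1 * ξ) * ψ (-(q.2 * ξ))
                + ψ (-(q.1 * ξ)) * ψ (q.2 * ξ) + ψ (-(q.1 * ξ)) * ψ (-(q.2 * ξ))) / 4 ∂τ := by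
              congr 1; funext q; ring
          _ = ((∫ q : ℝ × ℝ, ψ (q.1 * ξ) * ψ (q.2 * ξ) ∂τ)
                + (∫ q : ℝ × ℝ, ψ (q.1 * ξ) * ψ (-(q.2 * ξ)) ∂τ)
                + (∫ q : ℝ × ℝ, ψ (-(q.1 * ξ)) * ψ (q.2 * ξ) ∂τ)
                + (∫ q : ℝ × ℝ, ψ (-(q.1 * ξ)) * ψ (-(q.2 * ξ)) ∂τ)) / 4 := by
              have hiA : Integrable (fun q : ℝ × ℝ =>
                  ψ (q.1 * ξ) * ψ (q.2 * ξ) + ψ (q.1 * ξ) * ψ (-(q.2 * ξ))) τ := hi11.add hi12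
              have hiB : Integrable (fun q : ℝ × ℝ =>
                  ψ (q.1 * ξ) * ψ (q.2 * ξ) + ψ (q.1 * ξ) * ψ (-(q.2 * ξ))
                    + ψ (-(q.1 * ξ)) * ψ (q.2 * ξ)) τ := hiA.add hi21
              rw [integral_div, integral_add hiB hi22, integral_add hiA hi21,
                integral_add hi11 hi12]
          _ = ∫ q : ℝ × ℝ, ψ (q.1 * ξ) * ψ (q.2 * ξ) ∂τ := by
              rw [← h2221, ← h1222, ← h1112]; ring
      · -- j = 1, m ≥ 1
        have hm1 : 1 ≤ m := by omega
        rw [show m + 2 - 1 = m + 1 by omega, qhat.eq_2, qhat.eq_2]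
        have hqm := (qhat_meas_bdd τ ψ hm hb (m+1)).1
        have hqb := (qhat_meas_bdd τ ψ hm hb (m+1)).2
        have hgev : ∀ x, qhat τ ψ (m+1) (-x) = qhat τ ψ (m+1) x :=
          Hev (m+1) (by omega) (by omega)
        obtain ⟨hc1, _⟩ := chain τ hrot ψ (qhat τ ψ (m+1)) hm hqm hgev ξ
        have hi1 : Integrable (fun q : ℝ × ℝ => ψ (q.1 * ξ) * qhat τ ψ (m+1) (q.2 * ξ)) τ :=
          int_prod (hm.comp (measurable_fst.mul_const ξ))
            (hqm.comp (measurable_snd.mul_const ξ)) (fun q => hb _) (fun q => hqb _)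
        have hi3 : Integrable (fun q : ℝ × ℝ => ψ (-(q.1 * ξ)) * qhat τ ψ (m+1) (q.2 * ξ)) τ :=
          int_prod (hm.comp (measurable_fst.mul_const ξ).neg)
            (hqm.comp (measurable_snd.mul_const ξ)) (fun q => hb _) (fun q => hqb _)
        symm
        calc (∫ q : ℝ × ℝ, (ψ (q.1 * ξ) + ψ (-(q.1 * ξ))) / 2 *
                qhat τ (fun ζ => (ψ ζ + ψ (-ζ)) / 2) (m+1) (q.2 * ξ) ∂τ)
            = ∫ q : ℝ × ℝ, (ψ (q.1 * ξ) * qhat τ ψ (m+1) (q.2 * ξ)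
                + ψ (-(q.1 * ξ)) * qhat τ ψ (m+1) (q.2 * ξ)) / 2 ∂τ := by
              congr 1; funext q
              rw [Hs (m+1) (by omega) (by omega)]
              ring
          _ = ((∫ q : ℝ × ℝ, ψ (q.1 * ξ) * qhat τ ψ (m+1) (q.2 * ξ) ∂τ)
                + ∫ q : ℝ × ℝ, ψ (-(q.1 * ξ)) * qhat τ ψ (m+1) (q.2 * ξ) ∂τ) / 2 := by
              rw [integral_div, integral_add hi1 hi3]
          _ = ∫ q : ℝ × ℝ, ψ (q.1 * ξ) * qhat τ ψ (m+1) (q.2 * ξ) ∂τ := by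
              rw [hc1]; ring
    · by_cases hjtop : j = m + 1
      · -- j = m + 1, m ≥ 1
        subst hjtop
        have hm1 : 1 ≤ m := by omega
        rw [show m + 2 - (m + 1) = 1 by omega, qhat.eq_2, qhat.eq_2]
        have hqm := (qhat_meas_bdd τ ψ hm hb (m+1)).1
        have hqb := (qhat_meas_bdd τ ψ hm hb (m+1)).2
        have hgev : ∀ x, qhat τ ψ (m+1) (-x) = qhat τ ψ (m+1) x :=
          Hev (m+1) (by omega) (by omega)
        obtain ⟨_, hc2⟩ := chain τ hrot ψ (qhat τ ψ (m+1)) hm hqm hgev ξ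
        have hi2 : Integrable (fun q : ℝ × ℝ => qhat τ ψ (m+1) (q.1 * ξ) * ψ (q.2 * ξ)) τ :=
          int_prod (hqm.comp (measurable_fst.mul_const ξ))
            (hm.comp (measurable_snd.mul_const ξ)) (fun q => hqb _) (fun q => hb _)
        have hi4 : Integrable (fun q : ℝ × ℝ => qhat τ ψ (m+1) (q.1 * ξ) * ψ (-(q.2 * ξ))) τ :=
          int_prod (hqm.comp (measurable_fst.mul_const ξ))
            (hm.comp (measurable_snd.mul_const ξ).neg) (fun q => hqb _) (fun q => hb _)
        symm
        calc (∫ q : ℝ × ℝ, qhat τ (fun ζ => (ψ ζ + ψ (-ζ)) / 2) (m+1) (q.1 * ξ) *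
                ((ψ (q.2 * ξ) + ψ (-(q.2 * ξ))) / 2) ∂τ)
            = ∫ q : ℝ × ℝ, (qhat τ ψ (m+1) (q.1 * ξ) * ψ (q.2 * ξ)
                + qhat τ ψ (m+1) (q.1 * ξ) * ψ (-(q.2 * ξ))) / 2 ∂τ := by
              congr 1; funext q
              rw [Hs (m+1) (by omega) (by omega)]
              ring
          _ = ((∫ q : ℝ × ℝ, qhat τ ψ (m+1) (q.1 * ξ) * ψ (q.2 * ξ) ∂τ)
                + ∫ q : ℝ × ℝ, qhat τ ψ (m+1) (q.1 * ξ) * ψ (-(q.2 * ξ)) ∂τ) / 2 := by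
              rw [integral_div, integral_add hi2 hi4]
          _ = ∫ q : ℝ × ℝ, qhat τ ψ (m+1) (q.1 * ξ) * ψ (q.2 * ξ) ∂τ := by
              rw [hc2]; ring
      · -- middle terms : 2 ≤ j ≤ m
        congr 1; funext q
        rw [Hs j (by omega) (by omega), Hs (m + 2 - j) (by omega) (by omega)]

theorem stmt17 (τ : Measure (ℝ × ℝ)) [IsProbabilityMeasure τ]
    (hrot : RotationInvariant τ)
    (μ₀ : Measure ℝ) [IsProbabilityMeasure μ₀]
    (φ₀ : ℝ → ℂ) (hφ₀ : φ₀ = charFn μ₀) :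
    ∀ n : ℕ, 2 ≤ n → ∀ ξ : ℝ,
      qhat τ φ₀ n ξ = qhat τ (fun ζ => ((φ₀ ζ).re : ℂ)) n ξ := by
  have hφm : Measurable φ₀ := by
    rw [hφ₀]
    have : StronglyMeasurable (fun p : ℝ × ℝ => Complex.exp (Complex.I * ((p.1 * p.2 : ℝ) : ℂ))) := by
      apply Continuous.stronglyMeasurable
      fun_prop
    exact this.integral_prod_right'.measurable
  have hφb : ∀ ζ, ‖φ₀ ζ‖ ≤ 1 := by
    intro ζ
    rw [hφ₀]
    calc ‖∫ v, Complex.exp (Complex.I * ((ζ * v : ℝ) : ℂ)) ∂μ₀‖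
        ≤ 1 * (μ₀ Set.univ).toReal := norm_integral_le_of_norm_le_const (ae_of_all _ (fun v => by
          simp [Complex.norm_exp]))
      _ = 1 := by simp
  have hherm : ∀ ζ, φ₀ (-ζ) = starRingEnd ℂ (φ₀ ζ) := by
    intro ζ
    rw [hφ₀]
    unfold charFn
    rw [← integral_conj]
    congr 1; funext v
    rw [← Complex.exp_conj]
    congr 1
    simp [Complex.ext_iff]
  have hre : (fun ζ => ((φ₀ ζ).re : ℂ)) = fun ζ => (φ₀ ζ + φ₀ (-ζ)) / 2 := by
    funext ζ
    rw [hherm, Complex.add_conj]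
    push_cast
    ring
  intro n hn ξ
  rw [hre]
  exact key τ hrot n hn φ₀ hφm hφb ξ
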